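/- Let a, b, c, d, p, q, r be real numbers with a > 0, b > 0, c ≥ 0, d ≥ 0, p ≥ 0, r ≥ 0, q > 0 and q ≥ |p − r|. Define f(u,v) = u^r v^p (a v^q − c u^q) and g(u,v) = v^r u^p (b u^q − d v^q) for u, v ≥ 0. Then there exists a real number K > 0 such that for all u, v ≥ 0 one has (f(u,v) − K g(u,v)) · (u − K v) ≤ 0. -/

import Mathlib

set_option maxHeartbeats 1000000

open Real Set

private lemma aux_small (A B e : ℝ) (hA : 0 < A) (he : 0 < e) :
    ∃ x : ℝ, 0 < x ∧ x ≤ 1 ∧ B * x ^ e ≤ A := by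
  by_cases hB : B ≤ 0
  · exact ⟨1, one_pos, le_refl 1, by
      rw [Real.one_rpow]; nlinarith⟩
  · push_neg at hB
    refine ⟨min 1 ((A / B) ^ e⁻¹), by positivity, min_le_left _ _, ?_⟩
    have h1 : (min 1 ((A / B) ^ e⁻¹)) ^ e ≤ ((A / B) ^ e⁻¹) ^ e :=
      Real.rpow_le_rpow (by positivity) (min_le_right _ _) he.le
    have h2 : ((A / B) ^ e⁻¹) ^ e = A / B := by
      rw [← Real.rpow_mul (by positivity), inv_mul_cancel₀ he.ne', Real.rpow_one]
    rw [h2] at h1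
    calc B * (min 1 ((A / B) ^ e⁻¹)) ^ e ≤ B * (A / B) :=
          mul_le_mul_of_nonneg_left h1 hB.le
      _ = A := by field_simp

private lemma aux_large (A B e : ℝ) (hA : 0 < A) (he : 0 < e) :
    ∃ x : ℝ, 1 ≤ x ∧ B ≤ A * x ^ e := by
  by_cases hB : B ≤ A
  · exact ⟨1, le_refl 1, by rw [Real.one_rpow]; linarith⟩
  · push_neg at hB
    have hBA : 1 ≤ B / A := (one_le_div hA).mpr hB.le
    refine ⟨(B / A) ^ e⁻¹, Real.one_le_rpow hBA (by positivity), ?_⟩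
    rw [← Real.rpow_mul (by positivity), inv_mul_cancel₀ he.ne', Real.rpow_one]
    rw [mul_div_cancel₀ _ hA.ne']

theorem stmt_0 (a b c d p q r : ℝ)
    (ha : 0 < a) (hb : 0 < b) (hc : 0 ≤ c) (hd : 0 ≤ d)
    (hp : 0 ≤ p) (hr : 0 ≤ r) (hq : 0 < q) (hqpr : |p - r| ≤ q) :
    ∃ K : ℝ, 0 < K ∧ ∀ u v : ℝ, 0 ≤ u → 0 ≤ v →
      (u ^ r * v ^ p * (a * v ^ q - c * u ^ q)
        - K * (v ^ r * u ^ p * (b * u ^ q - d * v ^ q))) * (u - K * v) ≤ 0 := by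
  obtain ⟨hpr1, hpr2⟩ := abs_le.mp hqpr
  set m : ℝ := max p r with hm
  have hpm : p ≤ m := le_max_left p r
  have hrm : r ≤ m := le_max_right p r
  have hmrq : m ≤ r + q := max_le (by linarith) (by linarith)
  have hmpq : m ≤ p + q := max_le (by linarith) (by linarith)
  -- the polynomial whose root gives K
  set φ : ℝ → ℝ := fun K => a * K ^ r + d * K ^ (p + 1)
      - c * K ^ (r + q) - b * K ^ (p + q + 1) with hφ
  -- small endpoint
  obtain ⟨x₁, hx₁0, hx₁1, hx₁⟩ := aux_small (a / 2) c q (by linarith) hq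
  obtain ⟨x₂, hx₂0, hx₂1, hx₂⟩ := aux_small (a / 4) b (p + q + 1 - r) (by linarith)
    (by linarith)
  set K₀ : ℝ := min x₁ x₂ with hK₀def
  have hK₀0 : 0 < K₀ := lt_min hx₁0 hx₂0
  have hK₀1 : K₀ ≤ 1 := le_trans (min_le_left _ _) hx₁1
  have hφK₀ : 0 ≤ φ K₀ := by
    have e1 : c * K₀ ^ q ≤ a / 2 :=
      le_trans (mul_le_mul_of_nonneg_left
        (Real.rpow_le_rpow hK₀0.le (min_le_left _ _) hq.le) hc) hx₁
    have e2 : b * K₀ ^ (p + q + 1 - r) ≤ a / 4 :=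
      le_trans (mul_le_mul_of_nonneg_left
        (Real.rpow_le_rpow hK₀0.le (min_le_right _ _) (by linarith)) hb.le) hx₂
    have e3 : K₀ ^ (p + q + 1) = K₀ ^ r * K₀ ^ (p + q + 1 - r) := by
      rw [← Real.rpow_add hK₀0]; ring_nf
    have e4 : K₀ ^ (r + q) = K₀ ^ r * K₀ ^ q := Real.rpow_add hK₀0 r q
    have h5 : 0 < K₀ ^ r := Real.rpow_pos_of_pos hK₀0 r
    have h6 : 0 ≤ d * K₀ ^ (p + 1) := by positivity
    simp only [hφ, e3, e4]
    nlinarith [mul_le_mul_of_nonneg_left e1 h5.le, mul_le_mul_of_nonneg_left e2 h5.le]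
  -- large endpoint
  obtain ⟨y₁, hy₁1, hy₁⟩ := aux_large (b / 2) a (p + q + 1 - r) (by linarith) (by linarith)
  obtain ⟨y₂, hy₂1, hy₂⟩ := aux_large (b / 2) d q (by linarith) hq
  set K₁ : ℝ := max y₁ y₂ with hK₁def
  have hK₁1 : 1 ≤ K₁ := le_trans hy₁1 (le_max_left _ _)
  have hK₁0 : 0 < K₁ := lt_of_lt_of_le one_pos hK₁1
  have hφK₁ : φ K₁ ≤ 0 := by
    have e1 : a ≤ b / 2 * K₁ ^ (p + q + 1 - r) :=
      le_trans hy₁ (mul_le_mul_of_nonneg_left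
        (Real.rpow_le_rpow (by positivity) (le_max_left _ _) (by linarith)) (by linarith))
    have e2 : d ≤ b / 2 * K₁ ^ q :=
      le_trans hy₂ (mul_le_mul_of_nonneg_left
        (Real.rpow_le_rpow (by positivity) (le_max_right _ _) hq.le) (by linarith))
    have e3 : K₁ ^ (p + q + 1) = K₁ ^ r * K₁ ^ (p + q + 1 - r) := by
      rw [← Real.rpow_add hK₁0]; ring_nf
    have e4 : K₁ ^ (p + q + 1) = K₁ ^ (p + 1) * K₁ ^ q := by
      rw [← Real.rpow_add hK₁0]; ring_nf
    have h5 : 0 < K₁ ^ r := Real.rpow_pos_of_pos hK₁0 r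
    have h6 : 0 < K₁ ^ (p + 1) := Real.rpow_pos_of_pos hK₁0 (p + 1)
    have h7 : 0 ≤ c * K₁ ^ (r + q) := by positivity
    have h8 : b * K₁ ^ (p + q + 1) = K₁ ^ r * (b / 2 * K₁ ^ (p + q + 1 - r))
        + K₁ ^ (p + 1) * (b / 2 * K₁ ^ q) := by
      linear_combination b / 2 * e3 + b / 2 * e4
    simp only [hφ]
    nlinarith [mul_le_mul_of_nonneg_left e1 h5.le, mul_le_mul_of_nonneg_left e2 h6.le]
  -- IVT
  have hK₀K₁ : K₀ ≤ K₁ := le_trans hK₀1 hK₁1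
  have hcont : ContinuousOn φ (Icc K₀ K₁) := by
    have base : ∀ e : ℝ, ContinuousOn (fun K : ℝ => K ^ e) (Icc K₀ K₁) := by
      intro e x hx
      exact (Real.continuousAt_rpow_const x e
        (Or.inl (ne_of_gt (lt_of_lt_of_le hK₀0 hx.1)))).continuousWithinAt
    exact (((continuousOn_const.mul (base r)).add
        (continuousOn_const.mul (base (p + 1)))).sub
        (continuousOn_const.mul (base (r + q)))).sub
        (continuousOn_const.mul (base (p + q + 1)))
  obtain ⟨K, hKmem, hKroot⟩ := intermediate_value_Icc' hK₀K₁ hcont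
    (show (0 : ℝ) ∈ Icc (φ K₁) (φ K₀) from ⟨hφK₁, hφK₀⟩)
  have hK : 0 < K := lt_of_lt_of_le hK₀0 hKmem.1
  refine ⟨K, hK, ?_⟩
  -- the rescaled function χ
  set χ : ℝ → ℝ := fun s => a * s ^ (r - m) + K * d * s ^ (p - m)
      - c * s ^ (r + q - m) - K * b * s ^ (p + q - m) with hχ
  have hχK : χ K = 0 := by
    have h0 : χ K = K ^ (-m) * φ K := by
      simp only [hχ, hφ]
      rw [show r - m = -m + r by ring, show p - m = -m + p by ring,
        show r + q - m = -m + (r + q) by ring, show p + q - m = -m + (p + q) by ring,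
        Real.rpow_add hK (-m) r, Real.rpow_add hK (-m) p,
        Real.rpow_add hK (-m) (r + q), Real.rpow_add hK (-m) (p + q),
        Real.rpow_add hK p 1,
        show p + q + 1 = (p + q) + 1 by ring, Real.rpow_add hK (p + q) 1, Real.rpow_one]
      ring
    rw [h0, hKroot, mul_zero]
  have hχanti : ∀ x y : ℝ, 0 < x → x ≤ y → χ y ≤ χ x := by
    intro x y hx hxy
    have hy : 0 < y := lt_of_lt_of_le hx hxy
    have t1 : y ^ (r - m) ≤ x ^ (r - m) :=
      Real.rpow_le_rpow_of_nonpos hx hxy (by linarith)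
    have t2 : y ^ (p - m) ≤ x ^ (p - m) :=
      Real.rpow_le_rpow_of_nonpos hx hxy (by linarith)
    have t3 : x ^ (r + q - m) ≤ y ^ (r + q - m) :=
      Real.rpow_le_rpow hx.le hxy (by linarith)
    have t4 : x ^ (p + q - m) ≤ y ^ (p + q - m) :=
      Real.rpow_le_rpow hx.le hxy (by linarith)
    simp only [hχ]
    have := mul_le_mul_of_nonneg_left t1 ha.le
    have := mul_le_mul_of_nonneg_left t2 (by positivity : (0:ℝ) ≤ K * d)
    have := mul_le_mul_of_nonneg_left t3 hc
    have := mul_le_mul_of_nonneg_left t4 (by positivity : (0:ℝ) ≤ K * b)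
    linarith
  clear hcont hφK₀ hφK₁ hKmem hx₁ hx₂ hy₁ hy₂ hK₀1 hK₁1 hK₀K₁ hK₀0 hK₁0
  intro u v hu hv
  rcases eq_or_lt_of_le hv with hv0 | hv0
  · -- v = 0
    rw [← hv0]
    rw [Real.zero_rpow hq.ne']
    have h1 : 0 ≤ u ^ r * (0:ℝ) ^ p * (c * u ^ q) := by positivity
    have h2 : 0 ≤ K * ((0:ℝ) ^ r * u ^ p * (b * u ^ q)) := by positivity
    have heq : (u ^ r * (0:ℝ) ^ p * (a * 0 - c * u ^ q)
        - K * ((0:ℝ) ^ r * u ^ p * (b * u ^ q - d * 0)))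
        = -(u ^ r * (0:ℝ) ^ p * (c * u ^ q)) - K * ((0:ℝ) ^ r * u ^ p * (b * u ^ q)) := by
      ring
    have : (u ^ r * (0:ℝ) ^ p * (a * 0 - c * u ^ q)
        - K * ((0:ℝ) ^ r * u ^ p * (b * u ^ q - d * 0))) ≤ 0 := by
      rw [heq]; linarith
    have h3 : u - K * 0 = u := by ring
    rw [h3]
    exact mul_nonpos_iff.mpr (Or.inr ⟨this, hu⟩)
  rcases eq_or_lt_of_le hu with hu0 | hu0
  · -- u = 0, v > 0
    rw [← hu0]
    rw [Real.zero_rpow hq.ne']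
    have h1 : 0 ≤ (0:ℝ) ^ r * v ^ p * (a * v ^ q) := by positivity
    have h2 : 0 ≤ K * (v ^ r * (0:ℝ) ^ p * (d * v ^ q)) := by positivity
    have heq : ((0:ℝ) ^ r * v ^ p * (a * v ^ q - c * 0)
        - K * (v ^ r * (0:ℝ) ^ p * (b * 0 - d * v ^ q)))
        = (0:ℝ) ^ r * v ^ p * (a * v ^ q) + K * (v ^ r * (0:ℝ) ^ p * (d * v ^ q)) := by
      ring
    have hA : 0 ≤ ((0:ℝ) ^ r * v ^ p * (a * v ^ q - c * 0)
        - K * (v ^ r * (0:ℝ) ^ p * (b * 0 - d * v ^ q))) := by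
      rw [heq]; linarith
    have hB : (0:ℝ) - K * v ≤ 0 := by nlinarith
    exact mul_nonpos_iff.mpr (Or.inl ⟨hA, hB⟩)
  -- u, v > 0
  set s : ℝ := u / v with hs
  have hs0 : 0 < s := div_pos hu0 hv0
  have hsm : 0 < s ^ m := Real.rpow_pos_of_pos hs0 m
  have hvpow : ∀ e : ℝ, (0:ℝ) < v ^ e := fun e => Real.rpow_pos_of_pos hv0 e
  have hupow : ∀ e : ℝ, (0:ℝ) < u ^ e := fun e => Real.rpow_pos_of_pos hu0 e
  -- factorization
  have hdiv : ∀ e : ℝ, s ^ e = u ^ e / v ^ e := fun e => Real.div_rpow hu hv e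
  have hψχ : s ^ m * χ s = a * s ^ r + K * d * s ^ p - c * s ^ (r + q)
      - K * b * s ^ (p + q) := by
    simp only [hχ]
    rw [show r - m = -m + r by ring, show p - m = -m + p by ring,
      show r + q - m = -m + (r + q) by ring, show p + q - m = -m + (p + q) by ring,
      Real.rpow_add hs0 (-m) r, Real.rpow_add hs0 (-m) p,
      Real.rpow_add hs0 (-m) (r + q), Real.rpow_add hs0 (-m) (p + q)]
    have hss : s ^ m * s ^ (-m) = 1 := by
      rw [← Real.rpow_add hs0]; simp
    linear_combination (a * s ^ r + K * d * s ^ p - c * s ^ (r + q)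
      - K * b * s ^ (p + q)) * hss
  have k1 : v ^ (p + r + q) * s ^ r = u ^ r * (v ^ p * v ^ q) := by
    rw [hdiv r, show p + r + q = r + (p + q) by ring,
      Real.rpow_add hv0 r (p + q), Real.rpow_add hv0 p q]
    field_simp
  have k2 : v ^ (p + r + q) * s ^ p = u ^ p * (v ^ r * v ^ q) := by
    rw [hdiv p, show p + r + q = p + (r + q) by ring,
      Real.rpow_add hv0 p (r + q), Real.rpow_add hv0 r q]
    field_simp
  have k3 : v ^ (p + r + q) * s ^ (r + q) = u ^ r * u ^ q * v ^ p := by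
    rw [hdiv (r + q), show p + r + q = (r + q) + p by ring,
      Real.rpow_add hv0 (r + q) p, Real.rpow_add hu0 r q]
    field_simp
  have k4 : v ^ (p + r + q) * s ^ (p + q) = u ^ p * u ^ q * v ^ r := by
    rw [hdiv (p + q), show p + r + q = (p + q) + r by ring,
      Real.rpow_add hv0 (p + q) r, Real.rpow_add hu0 p q]
    field_simp
  have hfact : (u ^ r * v ^ p * (a * v ^ q - c * u ^ q)
      - K * (v ^ r * u ^ p * (b * u ^ q - d * v ^ q)))
      = v ^ (p + r + q) * (s ^ m * χ s) := by
    rw [hψχ]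
    linear_combination (-a) * k1 + (-(K * d)) * k2 + c * k3 + K * b * k4
  rw [hfact]
  rcases le_total (K * v) u with hcase | hcase
  · -- u ≥ K v, so s ≥ K, χ s ≤ 0
    have hKs : K ≤ s := (le_div_iff₀ hv0).mpr (by linarith)
    have hχs : χ s ≤ 0 := by rw [← hχK]; exact hχanti K s hK hKs
    have hA : v ^ (p + r + q) * (s ^ m * χ s) ≤ 0 :=
      mul_nonpos_of_nonneg_of_nonpos (hvpow (p + r + q)).le
        (mul_nonpos_of_nonneg_of_nonpos hsm.le hχs)
    have hB : 0 ≤ u - K * v := by linarith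
    exact mul_nonpos_iff.mpr (Or.inr ⟨hA, hB⟩)
  · -- u ≤ K v, χ s ≥ 0
    have hKs : s ≤ K := (div_le_iff₀ hv0).mpr (by linarith)
    have hχs : 0 ≤ χ s := by rw [← hχK]; exact hχanti s K hs0 hKs
    have hA : 0 ≤ v ^ (p + r + q) * (s ^ m * χ s) := by positivity
    have hB : u - K * v ≤ 0 := by linarith
    exact mul_nonpos_iff.mpr (Or.inl ⟨hA, hB⟩)
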